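/- Let f be an absolutely continuous probability density on ℝ whose derivative f′ is itself absolutely continuous with ∫ V(y) |f″(y)| dy < ∞ for a measurable function V ≥ 1 for which V(y+s)/V(y) is bounded uniformly in y for s in any compact set. Then ‖f(·−s) − f + s f′‖_V = O(s²) as s → 0, where ‖u‖_V = ∫ V |u| dλ. -/

import Mathlib

open MeasureTheory Filter Asymptotics intervalIntegral

/-- If f′ is absolutely continuous with ‖f″‖_V < ∞ and V has locally bounded
translation ratios, then ‖f(·−s) − f + s f′‖_V = O(s²) as s → 0. -/
theorem stmt_10
    (f f' f'' : ℝ → ℝ) (hf_meas : Measurable f) (hf'_meas : Measurable f')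
    (hf''_meas : Measurable f'')
    (hf_nonneg : ∀ y, 0 ≤ f y) (hf_prob : ∫ y, f y = 1)
    -- f absolutely continuous with derivative f′:
    (hFTC1 : ∀ a b : ℝ, f b - f a = ∫ x in a..b, f' x)
    -- f′ absolutely continuous with derivative f″:
    (hFTC2 : ∀ a b : ℝ, f' b - f' a = ∫ x in a..b, f'' x)
    (V : ℝ → ℝ) (hV_meas : Measurable V) (hV : ∀ y, 1 ≤ V y)
    (hVf'' : Integrable (fun y => V y * |f'' y|))
    -- V(y+s)/V(y) bounded uniformly in y for s in compacts:
    (hVratio : ∀ C > (0 : ℝ), ∃ M : ℝ, ∀ y s : ℝ, |s| ≤ C → V (y + s) ≤ M * V y) :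
    (fun s : ℝ => ∫ y, V y * |f (y - s) - f y + s * f' y|)
      =O[nhds 0] fun s => s ^ 2 := by
  have hVpos : ∀ y, (0:ℝ) < V y := fun y => lt_of_lt_of_le one_pos (hV y)
  -- f'' is integrable
  have hf''_int : Integrable f'' := by
    refine hVf''.mono' hf''_meas.aestronglyMeasurable ?_
    filter_upwards with y
    rw [Real.norm_eq_abs]
    exact le_mul_of_one_le_left (abs_nonneg _) (hV y)
  -- f' is continuous (being a primitive of an integrable function)
  have hf'_cont : Continuous f' := by
    have hrep : f' = fun b => f' 0 + ∫ x in (0:ℝ)..b, f'' x := by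
      funext b; have := hFTC2 0 b; linarith
    rw [hrep]
    exact continuous_const.add (hf''_int.continuous_primitive 0)
  obtain ⟨M, hM⟩ := hVratio 1 one_pos
  have hM1 : (1:ℝ) ≤ M := by
    have h := hM 0 0 (by norm_num)
    rw [add_zero] at h
    nlinarith [hVpos 0]
  set K := ∫ y, V y * |f'' y| with hK
  have hK0 : 0 ≤ K :=
    integral_nonneg fun y => mul_nonneg (hVpos y).le (abs_nonneg _)
  rw [isBigO_iff]
  refine ⟨M * K, ?_⟩
  have hball : ∀ᶠ s in nhds (0:ℝ), |s| ≤ 1 := by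
    filter_upwards [Metric.ball_mem_nhds (0:ℝ) one_pos] with s hs
    simp only [Metric.mem_ball, Real.dist_eq, sub_zero] at hs
    exact hs.le
  filter_upwards [hball] with s hs
  set g : ℝ → ℝ := fun y => f (y - s) - f y + s * f' y with hg
  have hg_meas : Measurable g :=
    ((hf_meas.comp (measurable_id.sub_const s)).sub hf_meas).add (hf'_meas.const_mul s)
  have hgV_nonneg : ∀ y, 0 ≤ V y * |g y| := fun y =>
    mul_nonneg (hVpos y).le (abs_nonneg _)
  -- volume of Ι 0 s
  have hvol : volume (Set.uIoc 0 s) = ENNReal.ofReal |s| := by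
    rw [Set.uIoc, Real.volume_Ioc]
    congr 1
    rcases le_total 0 s with h | h <;>
      simp [abs_of_nonneg, abs_of_nonpos, h, max_eq_right, max_eq_left, min_eq_left,
        min_eq_right] <;> linarith
  -- integrability of translated f''
  have hint : ∀ y : ℝ, Integrable fun r : ℝ => f'' (y - r) := by
    intro y
    have h2 : Integrable fun r : ℝ => f'' (-(r - y)) := hf''_int.comp_neg.comp_sub_right y
    have he : (fun r : ℝ => f'' (y - r)) = fun r : ℝ => f'' (-(r - y)) := by
      funext r; congr 1; ring
    rw [he]; exact h2
  -- pointwise bound: |g y| ≤ |s| * ∫_{Ι 0 s} |f''(y - r)| dr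
  have hpt : ∀ y : ℝ, |g y| ≤ |s| * ∫ r in Set.uIoc 0 s, |f'' (y - r)| := by
    intro y
    have hdiff : ∀ t : ℝ, f' y - f' (y - t) = ∫ r in (0:ℝ)..t, f'' (y - r) := by
      intro t
      rw [intervalIntegral.integral_comp_sub_left f'' y, show y - (0:ℝ) = y by ring]
      exact hFTC2 (y - t) y
    have hw_cont : Continuous fun t => ∫ r in (0:ℝ)..t, f'' (y - r) :=
      (hint y).continuous_primitive 0
    have hkey : g y = ∫ t in (0:ℝ)..s, ∫ r in (0:ℝ)..t, f'' (y - r) := by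
      have e1 : f y - f (y - s) = ∫ t in (0:ℝ)..s, f' (y - t) := by
        rw [intervalIntegral.integral_comp_sub_left f' y, show y - (0:ℝ) = y by ring]
        exact hFTC1 (y - s) y
      have hf'c : Continuous fun t => f' (y - t) :=
        hf'_cont.comp (continuous_const.sub continuous_id)
      have e2 : ∫ t in (0:ℝ)..s, (f' y - f' (y - t))
          = s * f' y - (f y - f (y - s)) := by
        rw [intervalIntegral.integral_sub intervalIntegrable_const
          (hf'c.intervalIntegrable 0 s), ← e1]
        simp [mul_comm]
      calc g y = s * f' y - (f y - f (y - s)) := by rw [hg]; ring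
        _ = ∫ t in (0:ℝ)..s, (f' y - f' (y - t)) := e2.symm
        _ = ∫ t in (0:ℝ)..s, ∫ r in (0:ℝ)..t, f'' (y - r) :=
          intervalIntegral.integral_congr fun t _ => hdiff t
    have hCint : IntegrableOn (fun r => |f'' (y - r)|) (Set.uIoc 0 s) :=
      (hint y).abs.integrableOn
    have hbound : ∀ t ∈ Set.uIoc 0 s,
        |∫ r in (0:ℝ)..t, f'' (y - r)| ≤ ∫ r in Set.uIoc 0 s, |f'' (y - r)| := by
      intro t ht
      have h1 : |∫ r in (0:ℝ)..t, f'' (y - r)| ≤ ∫ r in Set.uIoc 0 t, |f'' (y - r)| := by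
        simpa [Real.norm_eq_abs] using
          intervalIntegral.norm_integral_le_integral_norm_uIoc
            (f := fun r => f'' (y - r)) (a := 0) (b := t) (μ := volume)
      refine h1.trans (setIntegral_mono_set hCint ?_ ?_)
      · filter_upwards with r using abs_nonneg _
      · refine HasSubset.Subset.eventuallyLE ?_
        intro r hr
        rcases Set.mem_uIoc.1 hr with ⟨h1', h2'⟩ | ⟨h1', h2'⟩ <;>
          rcases Set.mem_uIoc.1 ht with ⟨h3', h4'⟩ | ⟨h3', h4'⟩ <;>
          refine Set.mem_uIoc.2 ?_
        · exact Or.inl ⟨h1', h2'.trans h4'⟩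
        · exfalso; linarith
        · exfalso; linarith
        · exact Or.inr ⟨lt_trans h3' h1', h2'⟩
    have h2 : |g y| ≤ ∫ t in Set.uIoc 0 s, |∫ r in (0:ℝ)..t, f'' (y - r)| := by
      rw [hkey]
      simpa [Real.norm_eq_abs] using
        intervalIntegral.norm_integral_le_integral_norm_uIoc
          (f := fun t => ∫ r in (0:ℝ)..t, f'' (y - r)) (a := 0) (b := s) (μ := volume)
    have h3 : ∫ t in Set.uIoc 0 s, |∫ r in (0:ℝ)..t, f'' (y - r)|
        ≤ ∫ t in Set.uIoc 0 s, ∫ r in Set.uIoc 0 s, |f'' (y - r)| := by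
      refine setIntegral_mono_on ?_ ?_ measurableSet_uIoc hbound
      · exact intervalIntegrable_iff.mp (hw_cont.abs.intervalIntegrable 0 s)
      · exact integrableOn_const (by rw [hvol]; exact ENNReal.ofReal_ne_top)
    have h4 : (∫ t in Set.uIoc 0 s, ∫ r in Set.uIoc 0 s, |f'' (y - r)| ∂(volume) ∂(volume))
        = |s| * ∫ r in Set.uIoc 0 s, |f'' (y - r)| := by
      rw [setIntegral_const, measureReal_def, hvol, ENNReal.toReal_ofReal (abs_nonneg s), smul_eq_mul]
    calc |g y| ≤ ∫ t in Set.uIoc 0 s, |∫ r in (0:ℝ)..t, f'' (y - r)| := h2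
      _ ≤ ∫ t in Set.uIoc 0 s, ∫ r in Set.uIoc 0 s, |f'' (y - r)| := h3
      _ = |s| * ∫ r in Set.uIoc 0 s, |f'' (y - r)| := h4
  -- main lintegral estimate
  have hprod : Measurable fun p : ℝ × ℝ => ENNReal.ofReal (V p.1 * |f'' (p.1 - p.2)|) :=
    ((hV_meas.comp measurable_fst).mul
      ((hf''_meas.comp (measurable_fst.sub measurable_snd)).abs)).ennreal_ofReal
  have heq : ∫ y, V y * |g y| = (∫⁻ y, ENNReal.ofReal (V y * |g y|)).toReal :=
    integral_eq_lintegral_of_nonneg_ae (Eventually.of_forall hgV_nonneg)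
      (hV_meas.mul hg_meas.abs).aestronglyMeasurable
  have chain : (∫⁻ y, ENNReal.ofReal (V y * |g y|)) ≤ ENNReal.ofReal (M * K * s ^ 2) := by
    have step1 : ∀ y, ENNReal.ofReal (V y * |g y|)
        ≤ ENNReal.ofReal |s|
          * ∫⁻ r in Set.uIoc 0 s, ENNReal.ofReal (V y * |f'' (y - r)|) := by
      intro y
      have hiOn : IntegrableOn (fun r => V y * |f'' (y - r)|) (Set.uIoc 0 s) :=
        ((hint y).abs.const_mul (V y)).integrableOn
      have heqr : ENNReal.ofReal (∫ r in Set.uIoc 0 s, V y * |f'' (y - r)|)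
          = ∫⁻ r in Set.uIoc 0 s, ENNReal.ofReal (V y * |f'' (y - r)|) :=
        ofReal_integral_eq_lintegral_ofReal hiOn
          (Eventually.of_forall fun r => mul_nonneg (hVpos y).le (abs_nonneg _))
      calc ENNReal.ofReal (V y * |g y|)
          ≤ ENNReal.ofReal (|s| * ∫ r in Set.uIoc 0 s, V y * |f'' (y - r)|) := by
            apply ENNReal.ofReal_le_ofReal
            rw [MeasureTheory.integral_const_mul]
            calc V y * |g y|
                ≤ V y * (|s| * ∫ r in Set.uIoc 0 s, |f'' (y - r)|) :=
                  mul_le_mul_of_nonneg_left (hpt y) (hVpos y).le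
              _ = |s| * (V y * ∫ r in Set.uIoc 0 s, |f'' (y - r)|) := by ring
        _ = ENNReal.ofReal |s|
            * ENNReal.ofReal (∫ r in Set.uIoc 0 s, V y * |f'' (y - r)|) :=
            ENNReal.ofReal_mul (abs_nonneg s)
        _ = _ := by rw [heqr]
    have hswap : (∫⁻ y, ∫⁻ r in Set.uIoc 0 s, ENNReal.ofReal (V y * |f'' (y - r)|))
        = ∫⁻ r in Set.uIoc 0 s, ∫⁻ y, ENNReal.ofReal (V y * |f'' (y - r)|) :=
      lintegral_lintegral_swap hprod.aemeasurable
    have inner : ∀ r ∈ Set.uIoc 0 s,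
        (∫⁻ y, ENNReal.ofReal (V y * |f'' (y - r)|)) ≤ ENNReal.ofReal (M * K) := by
      intro r hr
      have hr1 : |r| ≤ 1 := by
        rcases Set.mem_uIoc.1 hr with ⟨h1, h2⟩ | ⟨h1, h2⟩ <;> rw [abs_le] <;>
          constructor <;> linarith [le_abs_self s, neg_abs_le s]
      have tr : (∫⁻ y, ENNReal.ofReal (V y * |f'' (y - r)|))
          = ∫⁻ u, ENNReal.ofReal (V (u + r) * |f'' u|) := by
        rw [← lintegral_add_right_eq_self
          (fun y => ENNReal.ofReal (V y * |f'' (y - r)|)) r]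
        simp
      rw [tr]
      calc ∫⁻ u, ENNReal.ofReal (V (u + r) * |f'' u|)
          ≤ ∫⁻ u, ENNReal.ofReal M * ENNReal.ofReal (V u * |f'' u|) := by
            apply lintegral_mono; intro u
            show ENNReal.ofReal (V (u + r) * |f'' u|)
              ≤ ENNReal.ofReal M * ENNReal.ofReal (V u * |f'' u|)
            rw [← ENNReal.ofReal_mul (by linarith : (0:ℝ) ≤ M)]
            apply ENNReal.ofReal_le_ofReal
            calc V (u + r) * |f'' u| ≤ (M * V u) * |f'' u| :=
                mul_le_mul_of_nonneg_right (hM u r hr1) (abs_nonneg _)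
              _ = M * (V u * |f'' u|) := by ring
        _ = ENNReal.ofReal M * ∫⁻ u, ENNReal.ofReal (V u * |f'' u|) :=
            lintegral_const_mul' _ _ ENNReal.ofReal_ne_top
        _ = ENNReal.ofReal M * ENNReal.ofReal K := by
            rw [← ofReal_integral_eq_lintegral_ofReal hVf''
              (Eventually.of_forall fun u => mul_nonneg (hVpos u).le (abs_nonneg _))]
        _ = ENNReal.ofReal (M * K) := (ENNReal.ofReal_mul (by linarith)).symm
    calc (∫⁻ y, ENNReal.ofReal (V y * |g y|))
        ≤ ∫⁻ y, ENNReal.ofReal |s|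
            * ∫⁻ r in Set.uIoc 0 s, ENNReal.ofReal (V y * |f'' (y - r)|) :=
          lintegral_mono step1
      _ = ENNReal.ofReal |s|
          * ∫⁻ y, ∫⁻ r in Set.uIoc 0 s, ENNReal.ofReal (V y * |f'' (y - r)|) :=
          lintegral_const_mul' _ _ ENNReal.ofReal_ne_top
      _ = ENNReal.ofReal |s|
          * ∫⁻ r in Set.uIoc 0 s, ∫⁻ y, ENNReal.ofReal (V y * |f'' (y - r)|) := by
          rw [hswap]
      _ ≤ ENNReal.ofReal |s| * (ENNReal.ofReal (M * K) * volume (Set.uIoc 0 s)) := by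
          refine mul_le_mul_right ?_ _
          calc (∫⁻ r in Set.uIoc 0 s, ∫⁻ y, ENNReal.ofReal (V y * |f'' (y - r)|))
              ≤ ∫⁻ _ in Set.uIoc 0 s, ENNReal.ofReal (M * K) :=
              setLIntegral_mono measurable_const inner
            _ = ENNReal.ofReal (M * K) * volume (Set.uIoc 0 s) :=
              setLIntegral_const _ _
      _ = ENNReal.ofReal (M * K * s ^ 2) := by
          rw [hvol, ← ENNReal.ofReal_mul (by positivity : (0:ℝ) ≤ M * K),
            ← ENNReal.ofReal_mul (abs_nonneg s)]
          congr 1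
          rw [show |s| * (M * K * |s|) = M * K * (|s| * |s|) by ring, abs_mul_abs_self]
          ring
  rw [Real.norm_of_nonneg (integral_nonneg hgV_nonneg),
    Real.norm_of_nonneg (sq_nonneg s), heq]
  exact ENNReal.toReal_le_of_le_ofReal (by positivity) chain
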